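/- For 0 < α ≤ 1, write P_α(z) = ((1+z)/(1−z))^α = 1 + Σ_{n≥1} a_n z^n for z in the unit disk. Then every Taylor coefficient satisfies 0 ≤ a_n ≤ 2α for n = 1, 2, 3, …. -/

import Mathlib

open Complex Metric


noncomputable def pcf (α : ℝ) : ℕ → ℝ
  | 0 => 1
  | 1 => 2 * α
  | (n+2) => (2 * α * pcf α (n+1) + n * pcf α n) / (n+2)

lemma pcf_rec (α : ℝ) (n : ℕ) :
    ((n : ℝ) + 2) * pcf α (n+2) = 2 * α * pcf α (n+1) + n * pcf α n := by
  rw [pcf]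
  have : (n : ℝ) + 2 ≠ 0 := by positivity
  field_simp

lemma pcf_bounds (α : ℝ) (h0 : 0 < α) (h1 : α ≤ 1) :
    ∀ n, 0 ≤ pcf α n ∧ (n = 0 ∨ pcf α n ≤ 2 * α) ∧ 0 ≤ pcf α (n+1) ∧ pcf α (n+1) ≤ 2 * α := by
  intro n
  induction n with
  | zero => refine ⟨by norm_num [pcf], Or.inl rfl, by simp [pcf]; positivity, by simp [pcf]⟩
  | succ n ih =>
    obtain ⟨hn0, hn1, hm0, hm1⟩ := ih
    have hden : (0:ℝ) < (n : ℝ) + 2 := by positivity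
    refine ⟨hm0, Or.inr hm1, ?_, ?_⟩
    · rw [pcf]
      apply div_nonneg _ hden.le
      have : (0:ℝ) ≤ (n:ℝ) := Nat.cast_nonneg n
      positivity
    · rw [pcf]
      rw [div_le_iff₀ hden]
      rcases hn1 with rfl | hle
      · push_cast
        nlinarith [hm1, h0.le, h1]

      · have hc : (0:ℝ) ≤ (n:ℝ) := Nat.cast_nonneg n
        nlinarith [hm1, hle, hn0, h0.le, h1, hc]

lemma pcf_nonneg (α : ℝ) (h0 : 0 < α) (h1 : α ≤ 1) (n : ℕ) : 0 ≤ pcf α n :=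
  (pcf_bounds α h0 h1 n).1

lemma pcf_le (α : ℝ) (h0 : 0 < α) (h1 : α ≤ 1) {n : ℕ} (hn : 1 ≤ n) : pcf α n ≤ 2 * α := by
  obtain ⟨m, rfl⟩ := Nat.exists_eq_add_of_le hn
  rw [Nat.add_comm] at *; simpa using (pcf_bounds α h0 h1 m).2.2.2

lemma pcf_le_two (α : ℝ) (h0 : 0 < α) (h1 : α ≤ 1) (n : ℕ) : pcf α n ≤ 2 := by
  cases n with
  | zero => norm_num [pcf]
  | succ n => exact (pcf_le α h0 h1 (Nat.succ_le_succ (Nat.zero_le n))).trans (by linarith)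


open Complex Metric

lemma aux_summable : Summable (fun n : ℕ => ((n:ℝ)+1) * (2⁻¹:ℝ)^n) := by
  have h1 := summable_pow_mul_geometric_of_norm_lt_one (R := ℝ) 1 (r := 2⁻¹) (by norm_num)
  have h2 : Summable (fun n : ℕ => (2⁻¹:ℝ)^n) := summable_geometric_of_lt_one (by norm_num) (by norm_num)
  have h3 := h1.add h2
  refine h3.congr fun n => ?_
  push_cast
  ring


lemma csummable {F : ℕ → ℂ} (hF : ∀ n, ‖F n‖ ≤ 8*(((n:ℝ)+1) * (2⁻¹:ℝ)^n)) : Summable F :=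
  Summable.of_norm_bounded (aux_summable.mul_left 8) hF

lemma two_le_aux (n : ℕ) (x : ℝ) (hx : 0 ≤ x) : 2 * x ≤ 8*(((n:ℝ)+1) * x) := by
  nlinarith [mul_nonneg (by positivity : (0:ℝ) ≤ 8*(n:ℝ)+6) hx]

lemma bnd {x y X Y : ℝ} (hx : x ≤ X) (hy : y ≤ Y) (hy0 : 0 ≤ y) (hX0 : 0 ≤ X) :
    x*y ≤ X*Y := mul_le_mul hx hy hy0 hX0

section main
variable {α : ℝ}

set_option maxHeartbeats 2000000 in
lemma key_hasSum (h0 : 0 < α) (h1 : α ≤ 1) {z : ℂ} (hz : z ∈ Metric.ball (0:ℂ) 2⁻¹) :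
    HasSum (fun n => ((pcf α n : ℝ) : ℂ) * z ^ n)
      (Complex.exp ((α : ℂ) * Complex.log ((1 + z) / (1 - z)))) := by
  have hcnorm : ∀ n, ‖((pcf α n : ℝ) : ℂ)‖ ≤ 2 := by
    intro n
    rw [Complex.norm_real, Real.norm_eq_abs, _root_.abs_of_nonneg (pcf_nonneg α h0 h1 n)]
    exact pcf_le_two α h0 h1 n
  set c : ℕ → ℂ := fun n => ((pcf α n : ℝ) : ℂ) with hc
  set S : ℂ → ℂ := fun w => ∑' n : ℕ, c n * w ^ n with hS
  set D : ℂ → ℂ := fun w => ∑' n : ℕ, ((n:ℂ)+1) * c (n+1) * w ^ n with hD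
  have hpowle : ∀ (w : ℂ), ‖w‖ < 2⁻¹ → ∀ n : ℕ, ‖w‖^n ≤ (2⁻¹:ℝ)^n :=
    fun w hw n => pow_le_pow_left₀ (norm_nonneg w) hw.le n
  have hSsum : ∀ (w : ℂ), ‖w‖ < 2⁻¹ → Summable (fun n : ℕ => c n * w^n) := by
    intro w hw
    apply csummable
    intro n
    rw [norm_mul, norm_pow]
    calc ‖c n‖ * ‖w‖^n ≤ 2 * (2⁻¹:ℝ)^n :=
          bnd (hcnorm n) (hpowle w hw n) (by positivity) (by norm_num)
      _ ≤ 8*(((n:ℝ)+1) * (2⁻¹:ℝ)^n) := two_le_aux n _ (by positivity)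
  have hDsum : ∀ (w : ℂ), ‖w‖ < 2⁻¹ → Summable (fun n : ℕ => ((n:ℂ)+1) * c (n+1) * w^n) := by
    intro w hw
    apply csummable
    intro n
    rw [norm_mul, norm_mul, norm_pow]
    have h5' : ‖((n:ℂ)+1)‖ = (n:ℝ)+1 := by
      rw [show ((n:ℂ)+1) = ((n+1 : ℕ) : ℂ) by push_cast; ring, Complex.norm_natCast]
      push_cast; ring
    rw [h5']
    calc ((n:ℝ)+1) * ‖c (n+1)‖ * ‖w‖^n ≤ (((n:ℝ)+1) * 2) * (2⁻¹:ℝ)^n :=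
          bnd (bnd le_rfl (hcnorm (n+1)) (norm_nonneg _) (by positivity))
            (hpowle w hw n) (by positivity) (by positivity)
      _ ≤ 8*(((n:ℝ)+1) * (2⁻¹:ℝ)^n) := by
          have hq : (0:ℝ) ≤ (2⁻¹:ℝ)^n := by positivity
          nlinarith [mul_nonneg (Nat.cast_nonneg (α := ℝ) n) hq, hq]
  have hBsum : ∀ (w : ℂ), ‖w‖ < 2⁻¹ → Summable (fun n : ℕ => (n:ℂ) * c n * w^(n+1)) := by
    intro w hw
    apply csummable
    intro n
    rw [norm_mul, norm_mul, norm_pow, Complex.norm_natCast]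
    have h6' : (2⁻¹:ℝ)^(n+1) ≤ (2⁻¹:ℝ)^n := by
      apply pow_le_pow_of_le_one <;> norm_num
    calc (n:ℝ) * ‖c n‖ * ‖w‖^(n+1) ≤ ((n:ℝ) * 2) * (2⁻¹:ℝ)^(n+1) :=
          bnd (bnd le_rfl (hcnorm n) (norm_nonneg _) (Nat.cast_nonneg n))
            (hpowle w hw (n+1)) (by positivity) (by positivity)
      _ ≤ ((n:ℝ) * 2) * (2⁻¹:ℝ)^n :=
          bnd le_rfl h6' (by positivity) (by positivity)
      _ ≤ 8*(((n:ℝ)+1) * (2⁻¹:ℝ)^n) := by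
          have hq : (0:ℝ) ≤ (2⁻¹:ℝ)^n := by positivity
          nlinarith [mul_nonneg (Nat.cast_nonneg (α := ℝ) n) hq, hq]
  -- derivative of S
  have hS' : ∀ w ∈ Metric.ball (0:ℂ) 2⁻¹, HasDerivAt S (D w) w := by
    intro w hw
    have hwn : ‖w‖ < 2⁻¹ := by simpa [mem_ball_zero_iff] using hw
    have hu : Summable (fun n : ℕ => 8*(((n:ℝ)+1) * (2⁻¹:ℝ)^n)) := aux_summable.mul_left 8
    have hbound : ∀ (n : ℕ) (y : ℂ), y ∈ Metric.ball (0:ℂ) 2⁻¹ →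
        ‖c n * ((n:ℂ) * y^(n-1))‖ ≤ 8*(((n:ℝ)+1) * (2⁻¹:ℝ)^n) := by
      intro n y hy
      have hyn : ‖y‖ < 2⁻¹ := by simpa [mem_ball_zero_iff] using hy
      cases n with
      | zero => simpa using by positivity
      | succ m =>
        rw [norm_mul, norm_mul, norm_pow, Complex.norm_natCast]
        simp only [Nat.add_sub_cancel]
        have h7' : (2⁻¹:ℝ)^(m+1) = (2⁻¹:ℝ)^m * 2⁻¹ := pow_succ _ _
        calc ‖c (m+1)‖ * (((m+1:ℕ):ℝ) * ‖y‖^m) ≤ 2 * (((m+1:ℕ):ℝ) * (2⁻¹:ℝ)^m) :=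
              bnd (hcnorm (m+1)) (bnd le_rfl (hpowle y hyn m) (by positivity)
                (by positivity)) (by positivity) (by norm_num)
          _ ≤ 8*((((m+1:ℕ):ℝ)+1) * (2⁻¹:ℝ)^(m+1)) := by
              rw [h7']
              push_cast
              have hq : (0:ℝ) ≤ (2⁻¹:ℝ)^m := by positivity
              nlinarith [mul_nonneg (Nat.cast_nonneg (α := ℝ) m) hq, hq]
    have hg0 : Summable (fun n : ℕ => c n * (0:ℂ)^n) := by
      apply summable_of_ne_finset_zero (s := ({0} : Finset ℕ))
      intro n hn
      simp only [Finset.mem_singleton] at hn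
      simp [zero_pow hn]
    have hder := hasDerivAt_tsum_of_isPreconnected hu (isOpen_ball)
      ((convex_ball (0:ℂ) 2⁻¹).isPreconnected)
      (g := fun (n : ℕ) (w : ℂ) => c n * w^n)
      (g' := fun (n : ℕ) (w : ℂ) => c n * ((n:ℂ) * w^(n-1)))
      (fun n y _ => (hasDerivAt_pow n y).const_mul _)
      hbound (mem_ball_self (by norm_num)) hg0 hw
    have hg'sum : Summable (fun n : ℕ => c n * ((n:ℂ) * w^(n-1))) :=
      csummable (fun n => hbound n w hw)
    have heq : ∑' n : ℕ, c n * ((n:ℂ) * w^(n-1)) = D w := by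
      rw [hg'sum.tsum_eq_zero_add]
      simp only [Nat.cast_zero, zero_mul, mul_zero, zero_add, hD]
      refine tsum_congr fun n => ?_
      simp only [Nat.add_sub_cancel]
      push_cast
      ring
    rw [heq] at hder
    exact hder
  -- key ODE identity
  have hkey : ∀ (w : ℂ), ‖w‖ < 2⁻¹ → (1 - w^2) * D w = 2*(α:ℂ) * S w := by
    intro w hw
    have hA := hDsum w hw
    have hSm := hSsum w hw
    have hshift : Summable (fun n : ℕ => c (n+1) * w^(n+1)) := (summable_nat_add_iff 1).2 hSm
    have hB := hBsum w hw
    have hrec : ∀ n : ℕ, ((n:ℂ)+2) * c (n+2) = 2*(α:ℂ)*c (n+1) + (n:ℂ) * c n := by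
      intro n
      have h := pcf_rec α n
      simp only [hc]
      exact_mod_cast congrArg Complex.ofReal h
    have e1 : D w = c 1 + ∑' n : ℕ, (((n+1:ℕ):ℂ)+1) * c ((n+1)+1) * w^(n+1) := by
      simp only [hD]
      rw [hA.tsum_eq_zero_add]
      norm_num
    have e2 : ∑' n : ℕ, (((n+1:ℕ):ℂ)+1) * c ((n+1)+1) * w^(n+1)
        = ∑' n : ℕ, (2*(α:ℂ)*(c (n+1) * w^(n+1)) + (n:ℂ) * c n * w^(n+1)) := by
      refine tsum_congr fun n => ?_
      have h2 := hrec n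
      have h3 : (((n+1:ℕ):ℂ)+1) * c ((n+1)+1) = 2*(α:ℂ)*c (n+1) + (n:ℂ) * c n := by
        push_cast
        rw [show ((n:ℂ)+1+1) = ((n:ℂ)+2) by ring]
        exact h2
      calc (((n+1:ℕ):ℂ)+1) * c ((n+1)+1) * w^(n+1)
          = ((((n+1:ℕ)):ℂ)+1) * c ((n+1)+1) * w^(n+1) := by ring
        _ = (2*(α:ℂ)*c (n+1) + (n:ℂ) * c n) * w^(n+1) := by rw [h3]
        _ = 2*(α:ℂ)*(c (n+1) * w^(n+1)) + (n:ℂ) * c n * w^(n+1) := by ring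
    have e3 : ∑' n : ℕ, (2*(α:ℂ)*(c (n+1) * w^(n+1)) + (n:ℂ) * c n * w^(n+1))
        = 2*(α:ℂ) * (∑' n : ℕ, c (n+1) * w^(n+1)) + ∑' n : ℕ, (n:ℂ) * c n * w^(n+1) := by
      rw [(hshift.mul_left _).tsum_add hB, tsum_mul_left]
    have e4 : S w = c 0 + ∑' n : ℕ, c (n+1) * w^(n+1) := by
      simp only [hS]
      rw [hSm.tsum_eq_zero_add, pow_zero, mul_one]
    have e5 : ∑' n : ℕ, (n:ℂ) * c n * w^(n+1) = w^2 * D w := by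
      rw [hB.tsum_eq_zero_add]
      simp only [Nat.cast_zero, zero_mul, zero_add, hD]
      rw [← tsum_mul_left]
      refine tsum_congr fun n => ?_
      push_cast
      ring
    have hc0 : c 0 = 1 := by simp [hc, pcf]
    have hc1 : c 1 = 2*(α:ℂ) := by
      simp only [hc, pcf]
      push_cast
      ring
    linear_combination e1 + e2 + e3 + e5 - 2*(α:ℂ)*e4 + hc1 - 2*(α:ℂ)*hc0
  -- nonvanishing on the ball
  have hball : ∀ (w : ℂ), ‖w‖ < 2⁻¹ → (1 - w ≠ 0 ∧ 1 + w ≠ 0) := by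
    intro w hw
    constructor
    · intro h
      have hw1 : w = 1 := by linear_combination -h
      rw [hw1] at hw
      simp at hw
      norm_num at hw
    · intro h
      have hw1 : w = -1 := by linear_combination h
      rw [hw1] at hw
      simp at hw
      norm_num at hw
  have hslit : ∀ (w : ℂ), ‖w‖ < 2⁻¹ → (1 + w) / (1 - w) ∈ Complex.slitPlane := by
    intro w hw
    obtain ⟨hne1, hne2⟩ := hball w hw
    rw [Complex.mem_slitPlane_iff]
    left
    rw [Complex.div_re]
    have hns : 0 < Complex.normSq (1 - w) := Complex.normSq_pos.mpr hne1
    have hnw : Complex.normSq w < 4⁻¹ := by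
      have h := Complex.sq_norm w
      have h2 : ‖w‖ < 2⁻¹ := hw
      nlinarith [Complex.normSq_nonneg w, norm_nonneg w]
    rw [← add_div]
    apply div_pos _ hns
    rw [Complex.normSq_apply] at hnw
    simp only [Complex.add_re, Complex.sub_re, Complex.one_re, Complex.add_im, Complex.sub_im,
      Complex.one_im]
    nlinarith [hnw]
  have hL : ∀ (w : ℂ), ‖w‖ < 2⁻¹ →
      HasDerivAt (fun u : ℂ => Complex.log ((1 + u) / (1 - u)))
        (2 / ((1 + w) * (1 - w))) w := by
    intro w hw
    obtain ⟨hne1, hne2⟩ := hball w hw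
    have h1' : HasDerivAt (fun u : ℂ => 1 + u) 1 w := by
      simpa using (hasDerivAt_id w).const_add (1:ℂ)
    have h2' : HasDerivAt (fun u : ℂ => 1 - u) (-1) w := by
      simpa using (hasDerivAt_id w).const_sub (1:ℂ)
    have hq := h1'.div h2' hne1
    have hlog := (Complex.hasDerivAt_log (hslit w hw)).comp w hq
    convert hlog using 1 <;> try rfl
    field_simp
    ring
  set L : ℂ → ℂ := fun u => Complex.log ((1 + u) / (1 - u)) with hLdef
  set hfun : ℂ → ℂ := fun u => S u * Complex.exp (-(α:ℂ) * L u) with hhdef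
  have hh : ∀ w ∈ Metric.ball (0:ℂ) 2⁻¹, HasDerivAt hfun 0 w := by
    intro w hw
    have hwn : ‖w‖ < 2⁻¹ := by simpa [mem_ball_zero_iff] using hw
    obtain ⟨hne1, hne2⟩ := hball w hwn
    have hE : HasDerivAt (fun u => Complex.exp (-(α:ℂ) * L u))
        (Complex.exp (-(α:ℂ) * L w) * (-(α:ℂ) * (2 / ((1 + w) * (1 - w))))) w := by
      have hd := ((hL w hwn).const_mul (-(α:ℂ))).cexp
      convert hd using 1
    have hmul := (hS' w hw).mul hE
    convert hmul using 1 <;> try rfl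
    have hk := hkey w hwn
    have hprod : ((1+w)*(1-w)) ≠ 0 := mul_ne_zero hne2 hne1
    simp only [neg_mul]
    field_simp
    linear_combination -Complex.exp (-((α:ℂ) * L w)) * hk
  have hS0 : S 0 = 1 := by
    simp only [hS]
    rw [tsum_eq_single 0 (fun b hb => by simp [zero_pow hb])]
    simp [hc, pcf]
  have hh0 : hfun 0 = 1 := by
    simp only [hhdef, hLdef, hS0]
    norm_num [Complex.log_one]
  have hconst := (convex_ball (0:ℂ) 2⁻¹).is_const_of_fderivWithin_eq_zero
    (𝕜 := ℂ) (f := hfun)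
    (fun x hx => ((hh x hx).differentiableAt).differentiableWithinAt)
    (fun x hx => by
      rw [fderivWithin_of_isOpen isOpen_ball hx, (hh x hx).hasFDerivAt.fderiv]
      ext y
      simp)
    hz (mem_ball_self (by norm_num))
  have hzn : ‖z‖ < 2⁻¹ := by simpa [mem_ball_zero_iff] using hz
  have hSz : S z = Complex.exp ((α:ℂ) * L z) := by
    have h1' : S z * Complex.exp (-(α:ℂ) * L z) = 1 := by
      rw [show S z * Complex.exp (-(α:ℂ) * L z) = hfun z from rfl, hconst, hh0]
    have h2' : Complex.exp (-(α:ℂ) * L z) = (Complex.exp ((α:ℂ) * L z))⁻¹ := by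
      rw [← Complex.exp_neg]
      ring_nf
    rw [h2'] at h1'
    have hEne := Complex.exp_ne_zero ((α:ℂ) * L z)
    field_simp at h1'
    exact h1'
  have hfin := (hSsum z hzn).hasSum
  rw [show (∑' n : ℕ, c n * z ^ n) = S z from rfl, hSz] at hfin
  exact hfin
end main

/-- Löwner-type coefficient bound: for `0 < α ≤ 1`, the Taylor coefficients `a_n`
(`n ≥ 1`) of `P_α(z) = ((1+z)/(1-z))^α = 1 + Σ a_n zⁿ` satisfy `0 ≤ a_n ≤ 2α`.
Here `a_n` is encoded via `iteratedDeriv n P_α 0 = n! * a_n`. -/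
theorem Palpha_coeff_le (α : ℝ) (hα0 : 0 < α) (hα1 : α ≤ 1) (n : ℕ) (hn : 1 ≤ n) :
    ∃ r : ℝ, 0 ≤ r ∧ r ≤ 2 * α ∧
      iteratedDeriv n
        (fun z : ℂ => Complex.exp ((α : ℂ) * Complex.log ((1 + z) / (1 - z)))) 0
        = (n.factorial : ℂ) * (r : ℂ) := by
  set f : ℂ → ℂ := fun z => Complex.exp ((α : ℂ) * Complex.log ((1 + z) / (1 - z))) with hf
  set q : FormalMultilinearSeries ℂ ℂ ℂ :=
    FormalMultilinearSeries.ofScalars ℂ (fun m => ((pcf α m : ℝ) : ℂ)) with hq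
  have hcnorm : ∀ m : ℕ, ‖((pcf α m : ℝ) : ℂ)‖ ≤ 2 := by
    intro m
    rw [Complex.norm_real, Real.norm_eq_abs, _root_.abs_of_nonneg (pcf_nonneg α hα0 hα1 m)]
    exact pcf_le_two α hα0 hα1 m
  have hrad : ((2⁻¹ : NNReal) : ENNReal) ≤ q.radius := by
    apply FormalMultilinearSeries.le_radius_of_bound _ 2
    intro m
    have h1 : ‖q m‖ ≤ 2 := by
      rw [hq, FormalMultilinearSeries.ofScalars_norm]
      exact hcnorm m
    have h2 : ((2⁻¹:NNReal):ℝ)^m ≤ 1 := by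
      apply pow_le_one₀ <;> norm_num
    have h3 : (0:ℝ) ≤ ((2⁻¹:NNReal):ℝ)^m := by positivity
    nlinarith [norm_nonneg (q m)]
  have hball : HasFPowerSeriesOnBall f q 0 ((2⁻¹ : NNReal)) := by
    refine ⟨hrad, by norm_num, ?_⟩
    intro y hy
    have hy' : y ∈ Metric.ball (0:ℂ) 2⁻¹ := by
      rw [Metric.emetric_ball_nnreal] at hy
      simpa using hy
    have hsum := key_hasSum hα0 hα1 hy'
    simp only [zero_add]
    refine hsum.congr_fun fun k => ?_
    rw [hq, FormalMultilinearSeries.ofScalars_apply_eq, smul_eq_mul]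
  have hfact := hball.factorial_smul (y := (1:ℂ)) n
  have hqn : q n (fun _ => (1:ℂ)) = ((pcf α n : ℝ) : ℂ) := by
    rw [hq, FormalMultilinearSeries.ofScalars_apply_eq]
    simp
  refine ⟨pcf α n, pcf_nonneg α hα0 hα1 n, pcf_le α hα0 hα1 hn, ?_⟩
  rw [iteratedDeriv_eq_iteratedFDeriv, ← hfact, hqn, nsmul_eq_mul]
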